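/- Let α > 1 be a real number. There exists a constant C_α > 0 such that for every square-summable family (c_n)_{n∈ℤ} of complex numbers, Σ_{(n₁,n₂) ∈ ℤ², |n₁| ≠ |n₂|} ( |c_{n₁}| · |c_{n₂}| ) / | |n₁|^α − |n₂|^α | ≤ C_α Σ_{n∈ℤ} |c_n|². -/

import Mathlib

open Real

noncomputable section

private lemma rpow_sub_rpow_le' {p a b : ℝ} (hb : 0 ≤ b) (hba : b ≤ a) (hp : 1 ≤ p) :
    (a - b) ^ p ≤ a ^ p - b ^ p := by
  have h := NNReal.coe_le_coe.mpr (NNReal.add_rpow_le_rpow_add ((a - b).toNNReal) (b.toNNReal) hp)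
  push_cast [NNReal.coe_rpow] at h
  rw [Real.coe_toNNReal _ (by linarith : (0:ℝ) ≤ a - b), Real.coe_toNNReal _ hb,
    sub_add_cancel] at h
  linarith

private lemma key_ineq {α : ℝ} (hα : 1 < α) {k n : ℤ} (h : |k| ≠ |n|) :
    ENNReal.ofReal (1 / |(|(k:ℝ)| ^ α - |(n:ℝ)| ^ α)|) ≤
      ENNReal.ofReal (|((|n| - |k| : ℤ) : ℝ)| ^ (-α)) := by
  set x := |(k:ℝ)| with hx
  set y := |(n:ℝ)| with hy
  have hx0 : 0 ≤ x := abs_nonneg _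
  have hy0 : 0 ≤ y := abs_nonneg _
  have hxy : x ≠ y := by
    simp only [hx, hy, ← Int.cast_abs]
    exact_mod_cast fun hh => h (by exact_mod_cast hh)
  have hcast : |((|n| - |k| : ℤ) : ℝ)| = |y - x| := by
    push_cast [Int.cast_abs]
    rw [abs_sub_comm]
  rw [hcast]
  have hmain : |y - x| ^ α ≤ |x ^ α - y ^ α| ∧ 0 < |y - x| ^ α := by
    have hsub : 0 < |y - x| := abs_pos.mpr (sub_ne_zero.mpr (fun hh => hxy hh.symm))
    refine ⟨?_, Real.rpow_pos_of_pos hsub _⟩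
    rcases le_or_gt x y with hle | hlt
    · have h1 : x ^ α ≤ y ^ α := Real.rpow_le_rpow hx0 hle (by linarith)
      have h2 : (y - x) ^ α ≤ y ^ α - x ^ α := rpow_sub_rpow_le' hx0 hle hα.le
      rw [abs_of_nonneg (by linarith : (0:ℝ) ≤ y - x), abs_sub_comm,
        abs_of_nonneg (by linarith : (0:ℝ) ≤ y ^ α - x ^ α)]
      exact h2
    · have h1 : y ^ α ≤ x ^ α := Real.rpow_le_rpow hy0 hlt.le (by linarith)
      have h2 : (x - y) ^ α ≤ x ^ α - y ^ α := rpow_sub_rpow_le' hy0 hlt.le hα.le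
      rw [abs_sub_comm, abs_of_nonneg (by linarith : (0:ℝ) ≤ x - y),
        abs_of_nonneg (by linarith : (0:ℝ) ≤ x ^ α - y ^ α)]
      exact h2
  obtain ⟨hle, hpos⟩ := hmain
  rw [Real.rpow_neg (abs_nonneg _), ← one_div]
  exact ENNReal.ofReal_le_ofReal (one_div_le_one_div_of_le hpos hle)

private lemma inner_bound {α : ℝ} (hα : 1 < α) (k : ℤ) :
    (∑' n : ℤ, if |k| ≠ |n| then
        ENNReal.ofReal (1 / |(|(k:ℝ)| ^ α - |(n:ℝ)| ^ α)|) else 0) ≤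
      2 * ∑' l : ℤ, ENNReal.ofReal (|(l:ℝ)| ^ (-α)) := by
  set g : ℤ × Bool → ENNReal := fun q => ENNReal.ofReal (|(q.1:ℝ)| ^ (-α)) with hg
  have hi : Function.Injective (fun n : ℤ => ((|n| - |k|, decide (0 ≤ n)) : ℤ × Bool)) := by
    intro a b hab
    simp only [Prod.mk.injEq, decide_eq_decide] at hab
    obtain ⟨h1, h2⟩ := hab
    have : |a| = |b| := by omega
    rcases abs_eq_abs.mp this with rfl | rfl
    · rfl
    · omega
  calc (∑' n : ℤ, if |k| ≠ |n| then
        ENNReal.ofReal (1 / |(|(k:ℝ)| ^ α - |(n:ℝ)| ^ α)|) else 0)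
      ≤ ∑' n : ℤ, g ((|n| - |k|, decide (0 ≤ n)) : ℤ × Bool) := by
        refine ENNReal.tsum_le_tsum fun n => ?_
        by_cases h : |k| ≠ |n|
        · rw [if_pos h]
          exact key_ineq hα h
        · rw [if_neg h]
          exact zero_le
    _ ≤ ∑' q : ℤ × Bool, g q := ENNReal.tsum_comp_le_tsum_of_injective hi g
    _ = ∑' l : ℤ, ∑' _ : Bool, ENNReal.ofReal (|(l:ℝ)| ^ (-α)) := ENNReal.tsum_prod'
    _ = 2 * ∑' l : ℤ, ENNReal.ofReal (|(l:ℝ)| ^ (-α)) := by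
        rw [← ENNReal.tsum_mul_left]
        refine tsum_congr fun l => ?_
        rw [tsum_bool, two_mul]

/-- Non-resonant sum bound behind the `L^∞_x L²_t` Strichartz estimate:
`Σ_{|n₁| ≠ |n₂|} |c_{n₁}||c_{n₂}| / ||n₁|^α − |n₂|^α| ≤ C Σ |c_n|²`. -/
theorem nonresonant_sum_bound (α : ℝ) (hα : 1 < α) :
    ∃ C : ℝ, 0 < C ∧
      ∀ c : ℤ → ℂ, Summable (fun n => ‖c n‖ ^ 2) →
        ∑' p : ℤ × ℤ,
            (if |p.1| ≠ |p.2| then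
              ENNReal.ofReal
                (‖c p.1‖ * ‖c p.2‖ / |(|(p.1 : ℝ)| ^ α - |(p.2 : ℝ)| ^ α)|)
            else 0)
          ≤ ENNReal.ofReal C * ∑' n : ℤ, ENNReal.ofReal (‖c n‖ ^ 2) := by
  have hZsum : Summable fun l : ℤ => |(l:ℝ)| ^ (-α) := Real.summable_abs_int_rpow hα
  set Z : ℝ := ∑' l : ℤ, |(l:ℝ)| ^ (-α) with hZ
  have hZnn : 0 ≤ Z := tsum_nonneg fun _ => Real.rpow_nonneg (abs_nonneg _) _
  refine ⟨2 * Z + 1, by linarith, fun c hc => ?_⟩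
  set W : ℤ × ℤ → ENNReal := fun p =>
    if |p.1| ≠ |p.2| then
      ENNReal.ofReal (1 / |(|(p.1 : ℝ)| ^ α - |(p.2 : ℝ)| ^ α)|) else 0 with hW
  set A : ℤ × ℤ → ENNReal := fun p => ENNReal.ofReal (‖c p.1‖ ^ 2) * W p with hA
  set B : ℤ × ℤ → ENNReal := fun p => ENNReal.ofReal (‖c p.2‖ ^ 2) * W p with hB
  -- pointwise bound
  have hpt : ∀ p : ℤ × ℤ,
      (if |p.1| ≠ |p.2| then
        ENNReal.ofReal
          (‖c p.1‖ * ‖c p.2‖ / |(|(p.1 : ℝ)| ^ α - |(p.2 : ℝ)| ^ α)|)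
      else 0) ≤ 2⁻¹ * (A p + B p) := by
    intro p
    by_cases h : |p.1| ≠ |p.2|
    · rw [if_pos h]
      simp only [hA, hB, hW, if_pos h]
      set x := ‖c p.1‖
      set y := ‖c p.2‖
      set D := |(|(p.1 : ℝ)| ^ α - |(p.2 : ℝ)| ^ α)|
      have hD : 0 ≤ 1 / D := by positivity
      have hreal : x * y / D ≤ 2⁻¹ * (x ^ 2 * (1 / D) + y ^ 2 * (1 / D)) := by
        have h1 : x * y ≤ (x ^ 2 + y ^ 2) / 2 := by nlinarith [sq_nonneg (x - y)]
        calc x * y / D = x * y * (1 / D) := by rw [div_eq_mul_one_div]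
          _ ≤ ((x ^ 2 + y ^ 2) / 2) * (1 / D) := mul_le_mul_of_nonneg_right h1 hD
          _ = 2⁻¹ * (x ^ 2 * (1 / D) + y ^ 2 * (1 / D)) := by ring
      calc ENNReal.ofReal (x * y / D)
          ≤ ENNReal.ofReal (2⁻¹ * (x ^ 2 * (1 / D) + y ^ 2 * (1 / D))) :=
            ENNReal.ofReal_le_ofReal hreal
        _ = 2⁻¹ * (ENNReal.ofReal (x ^ 2) * ENNReal.ofReal (1 / D)
              + ENNReal.ofReal (y ^ 2) * ENNReal.ofReal (1 / D)) := by
            rw [ENNReal.ofReal_mul (by norm_num : (0:ℝ) ≤ 2⁻¹),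
              ENNReal.ofReal_add (by positivity) (by positivity),
              ENNReal.ofReal_mul (by positivity), ENNReal.ofReal_mul (by positivity)]
            congr 1
            rw [ENNReal.ofReal_inv_of_pos two_pos, ENNReal.ofReal_ofNat]
    · rw [if_neg h]
      exact zero_le
  -- symmetry
  have hsymm : ∑' p : ℤ × ℤ, B p = ∑' p : ℤ × ℤ, A p := by
    rw [← (Equiv.prodComm ℤ ℤ).tsum_eq A]
    refine tsum_congr fun p => ?_
    simp only [hA, hB, hW, Equiv.prodComm_apply, Prod.fst_swap, Prod.snd_swap]
    congr 1
    exact if_congr ne_comm (by rw [abs_sub_comm]) rfl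
  -- A-sum bound
  have hAbound : ∑' p : ℤ × ℤ, A p ≤
      ENNReal.ofReal (2 * Z) * ∑' n : ℤ, ENNReal.ofReal (‖c n‖ ^ 2) := by
    have hZe : (∑' l : ℤ, ENNReal.ofReal (|(l:ℝ)| ^ (-α))) = ENNReal.ofReal Z :=
      (ENNReal.ofReal_tsum_of_nonneg (fun _ => Real.rpow_nonneg (abs_nonneg _) _) hZsum).symm
    calc ∑' p : ℤ × ℤ, A p
        = ∑' k : ℤ, ∑' n : ℤ, ENNReal.ofReal (‖c k‖ ^ 2) * W (k, n) := ENNReal.tsum_prod'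
      _ = ∑' k : ℤ, ENNReal.ofReal (‖c k‖ ^ 2) * ∑' n : ℤ, W (k, n) := by
          exact tsum_congr fun k => ENNReal.tsum_mul_left
      _ ≤ ∑' k : ℤ, ENNReal.ofReal (‖c k‖ ^ 2) * ENNReal.ofReal (2 * Z) := by
          refine ENNReal.tsum_le_tsum fun k => mul_le_mul_right ?_ _
          calc ∑' n : ℤ, W (k, n) ≤ 2 * ∑' l : ℤ, ENNReal.ofReal (|(l:ℝ)| ^ (-α)) :=
                inner_bound hα k
            _ = ENNReal.ofReal (2 * Z) := by
                rw [hZe, ENNReal.ofReal_mul (by norm_num : (0:ℝ) ≤ 2)]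
                norm_num
      _ = ENNReal.ofReal (2 * Z) * ∑' n : ℤ, ENNReal.ofReal (‖c n‖ ^ 2) := by
          rw [ENNReal.tsum_mul_right, mul_comm]
  calc ∑' p : ℤ × ℤ,
        (if |p.1| ≠ |p.2| then
          ENNReal.ofReal
            (‖c p.1‖ * ‖c p.2‖ / |(|(p.1 : ℝ)| ^ α - |(p.2 : ℝ)| ^ α)|)
        else 0)
      ≤ ∑' p : ℤ × ℤ, 2⁻¹ * (A p + B p) := ENNReal.tsum_le_tsum hpt
    _ = 2⁻¹ * (∑' p : ℤ × ℤ, A p + ∑' p : ℤ × ℤ, B p) := by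
        rw [ENNReal.tsum_mul_left, ENNReal.tsum_add]
    _ = ∑' p : ℤ × ℤ, A p := by
        rw [hsymm, ← two_mul, ← mul_assoc,
          ENNReal.inv_mul_cancel two_ne_zero ENNReal.ofNat_ne_top, one_mul]
    _ ≤ ENNReal.ofReal (2 * Z) * ∑' n : ℤ, ENNReal.ofReal (‖c n‖ ^ 2) := hAbound
    _ ≤ ENNReal.ofReal (2 * Z + 1) * ∑' n : ℤ, ENNReal.ofReal (‖c n‖ ^ 2) :=
        mul_le_mul_left (ENNReal.ofReal_le_ofReal (by linarith)) _
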